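/- Under gradient flow over the hierarchical tensor factorization objective, for all ν ∈ int(T), r ∈ [R_ν], vectors w, w' ∈ LC(ν,r), and all t ≥ 0: ‖w(t)‖² − ‖w'(t)‖² = ‖w(0)‖² − ‖w'(0)‖², i.e., the differences between squared norms of weight vectors in the same local component are constant through time. -/

import Mathlib

namespace HTF

/-- Rooted tree whose leaves are labeled by elements of `Fin N`. -/
inductive MTree (N : ℕ) : Type
  | leaf : Fin N → MTree N
  | node : List (MTree N) → MTree N

noncomputable instance {N : ℕ} : DecidableEq (MTree N) := fun _ _ => Classical.dec _

namespace MTree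

variable {N : ℕ}

/-- The list of leaf labels of the tree. -/
def leafList : MTree N → List (Fin N)
  | .leaf i => [i]
  | .node ts => ts.attach.flatMap fun t => t.1.leafList
decreasing_by simp only [MTree.node.sizeOf_spec]; have := List.sizeOf_lt_of_mem t.2; omega

/-- The label of a node: set of leaf indices appearing in its subtree. -/
def label (t : MTree N) : Finset (Fin N) := t.leafList.toFinset

/-- All nodes (subtrees) of the tree. -/
def nodes : MTree N → List (MTree N)
  | .leaf i => [.leaf i]
  | .node ts => .node ts :: ts.attach.flatMap fun t => t.1.nodes
decreasing_by simp only [MTree.node.sizeOf_spec]; have := List.sizeOf_lt_of_mem t.2; omega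

/-- The children of a node. -/
def children : MTree N → List (MTree N)
  | .leaf _ => []
  | .node ts => ts

/-- Interior (non-leaf) node. -/
def IsInterior : MTree N → Prop
  | .leaf _ => False
  | .node _ => True

/-- Every non-leaf node has at least one child. -/
def Branching : MTree N → Prop
  | .leaf _ => True
  | .node ts => ts ≠ [] ∧ ∀ t ∈ ts.attach, Branching t.1
decreasing_by simp only [MTree.node.sizeOf_spec]; have := List.sizeOf_lt_of_mem t.2; omega

/-- A valid mode tree over `[N]`: it has exactly `N` leaves, labeled `{1},...,{N}`
(each index appearing exactly once), and interior nodes have children. -/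
def Valid (t : MTree N) : Prop :=
  t.leafList.Nodup ∧ (∀ i : Fin N, i ∈ t.leafList) ∧ t.Branching

/-- The parent of node `ν` in the tree (first argument), if it exists. -/
noncomputable def parentIn : MTree N → MTree N → Option (MTree N)
  | .leaf _, _ => none
  | .node ts, ν =>
      if ν ∈ ts then some (.node ts)
      else ts.attach.findSome? fun t => parentIn t.1 ν
termination_by T _ => sizeOf T
decreasing_by simp only [MTree.node.sizeOf_spec]; have := List.sizeOf_lt_of_mem t.2; omega

end MTree

open MTree

variable {N : ℕ} (D : Fin N → ℕ)

/-- Full index set of an order-`N` tensor with mode dimensions `D`. -/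
abbrev Idx : Type := ∀ n, Fin (D n)

/-- The intermediate tensors `W^(ν,r)` of a hierarchical tensor factorization with
local-component numbers `R` and weight matrices `W` (columns indexed by `ℕ`).
An order-`|label ν|` tensor is represented as a function of a full index tuple that
only depends on the coordinates in `label ν`; with this representation, the tensor
product of tensors over disjoint mode sets is pointwise multiplication and the mode
permutation `π_ν` is the identity. -/
noncomputable def interm (R : MTree N → ℕ) (W : ∀ ν : MTree N, Fin (R ν) → ℕ → ℝ) :
    MTree N → ℕ → Idx D → ℝ
  | .leaf i, r => fun x =>
      if h : R (.leaf i) = D i then W (.leaf i) (Fin.cast h.symm (x i)) r else 0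
  | .node ts, r => fun x =>
      ∑ r' : Fin (R (.node ts)),
        W (.node ts) r' r * (ts.attach.map fun t => interm R W t.1 (r' : ℕ) x).prod
decreasing_by simp only [MTree.node.sizeOf_spec]; have := List.sizeOf_lt_of_mem t.2; omega

/-- The end tensor `W_H` of the hierarchical tensor factorization with mode tree `T`. -/
noncomputable def endT (R : MTree N → ℕ) (W : ∀ ν : MTree N, Fin (R ν) → ℕ → ℝ)
    (T : MTree N) : Idx D → ℝ :=
  interm D R W T 0

/-- Entry `(i, j)` of the weight matrix at node `ν` (zero outside the row range). -/
noncomputable def went (R : MTree N → ℕ) (W : ∀ ν : MTree N, Fin (R ν) → ℕ → ℝ)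
    (ν : MTree N) (i j : ℕ) : ℝ :=
  if h : i < R ν then W ν ⟨i, h⟩ j else 0

/-- `R_{Pa(ν)}` : the number of local components at the parent of `ν` in `T`
(`1` if `ν` is the root). -/
noncomputable def Rpar (R : MTree N → ℕ) (T ν : MTree N) : ℕ :=
  if ν = T then 1 else ((parentIn T ν).map R).getD 0

/-- Replace the weight matrix at node `μ` by `A`, keeping all other weight matrices. -/
noncomputable def replace (R : MTree N → ℕ) (W : ∀ ν : MTree N, Fin (R ν) → ℕ → ℝ)
    (μ : MTree N) (A : Fin (R μ) → ℕ → ℝ) : ∀ ν : MTree N, Fin (R ν) → ℕ → ℝ :=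
  fun ν => if h : ν = μ then fun i j => A (Fin.cast (congrArg R h) i) j else W ν

/-- Frobenius (Euclidean) inner product of order-`N` tensors. -/
noncomputable def tinner (A B : Idx D → ℝ) : ℝ := ∑ x, A x * B x

/-- Frobenius norm of an order-`N` tensor. -/
noncomputable def tnorm (A : Idx D → ℝ) : ℝ := Real.sqrt (∑ x, (A x) ^ 2)

/-- Frobenius norm of an order-`|s|` tensor represented as a function of a full index
tuple depending only on the coordinates in `s` (so that the sum over the full index
set over-counts each entry `∏_{n ∉ s} D n` times). -/
noncomputable def rnorm (s : Finset (Fin N)) (A : Idx D → ℝ) : ℝ :=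
  Real.sqrt ((∑ x, (A x) ^ 2) / ∏ n ∈ sᶜ, (D n : ℝ))

/-- Squared norm of the `r`'th column of the weight matrix at node `c`. -/
noncomputable def colSq (R : MTree N → ℕ) (W : ∀ ν : MTree N, Fin (R ν) → ℕ → ℝ)
    (c : MTree N) (r : ℕ) : ℝ :=
  ∑ i : Fin (R c), (W c i r) ^ 2

/-- Squared norm of the `r`'th row of the weight matrix at node `ν` of `T`. -/
noncomputable def rowSq (R : MTree N → ℕ) (W : ∀ ν : MTree N, Fin (R ν) → ℕ → ℝ)
    (T ν : MTree N) (r : ℕ) : ℝ :=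
  ∑ j : Fin (Rpar R T ν), (went R W ν r (j : ℕ)) ^ 2

/-- `σ^(ν,r)` : the norm of the `(ν,r)`'th local component, i.e. the product of the
norms of the vectors in `LC(ν,r)` (the `r`'th row of `W^(ν)` together with the `r`'th
columns of the weight matrices of the children of `ν`). -/
noncomputable def sigmaLoc (R : MTree N → ℕ) (W : ∀ ν : MTree N, Fin (R ν) → ℕ → ℝ)
    (T ν : MTree N) (r : ℕ) : ℝ :=
  Real.sqrt (rowSq R W T ν r) * (ν.children.map fun c => Real.sqrt (colSq R W c r)).prod

/-- `PadR_r(W^(ν)_{r,:})` : the matrix whose `r`'th row is the `r`'th row of `W^(ν)`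
and whose other rows are zero. -/
noncomputable def padRow (R : MTree N → ℕ) (W : ∀ ν : MTree N, Fin (R ν) → ℕ → ℝ)
    (ν : MTree N) (r : ℕ) : Fin (R ν) → ℕ → ℝ :=
  fun i j => if (i : ℕ) = r then W ν i j else 0

/-- `PadC_r(W^(c)_{:,r})` : the matrix whose `r`'th column is the `r`'th column of
`W^(c)` and whose other columns are zero. -/
noncomputable def padCol (R : MTree N → ℕ) (W : ∀ ν : MTree N, Fin (R ν) → ℕ → ℝ)
    (c : MTree N) (r : ℕ) : Fin (R c) → ℕ → ℝ :=
  fun i j => if j = r then W c i r else 0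

/-- `Ĉ^(ν,r)` : the end tensor obtained by normalizing the `r`'th local component at
`ν` and setting all other local components at `ν` to zero, i.e. the end tensor computed
with `W^(ν)` replaced by `σ^{-1} · PadR_r(W^(ν)_{r,:})` (and `0` if `σ^(ν,r) = 0`). -/
noncomputable def hatC (R : MTree N → ℕ) (W : ∀ ν : MTree N, Fin (R ν) → ℕ → ℝ)
    (T ν : MTree N) (r : ℕ) : Idx D → ℝ :=
  if sigmaLoc R W T ν r = 0 then 0
  else endT D R (replace R W ν fun i j =>
    if (i : ℕ) = r then (sigmaLoc R W T ν r)⁻¹ * W ν i j else 0) T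

/-- The objective `φ_H = L_H ∘ (end tensor)`. -/
noncomputable def obj (L : (Idx D → ℝ) → ℝ) (R : MTree N → ℕ) (T : MTree N)
    (W : ∀ ν : MTree N, Fin (R ν) → ℕ → ℝ) : ℝ :=
  L (endT D R W T)

/-- Update the single entry `(i, j)` of the weight matrix at node `μ` to the value `s`. -/
noncomputable def upd (R : MTree N → ℕ) (W : ∀ ν : MTree N, Fin (R ν) → ℕ → ℝ)
    (μ : MTree N) (i j : ℕ) (s : ℝ) : ∀ ν : MTree N, Fin (R ν) → ℕ → ℝ :=
  fun ν i' j' => if ν = μ ∧ (i' : ℕ) = i ∧ j' = j then s else W ν i' j'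

/-- `∂φ_H/∂W^(μ)_{i,j}` : the partial derivative of the objective with respect to the
`(i,j)` entry of the weight matrix at node `μ`, at the point `W`. -/
noncomputable def dObj (L : (Idx D → ℝ) → ℝ) (R : MTree N → ℕ) (T : MTree N)
    (W : ∀ ν : MTree N, Fin (R ν) → ℕ → ℝ) (μ : MTree N) (i j : ℕ) : ℝ :=
  deriv (fun s : ℝ => obj D L R T (upd R W μ i j s)) (went R W μ i j)

/-- `∇L(A)` : the gradient of a loss over tensors, entrywise. -/
noncomputable def tgrad (L : (Idx D → ℝ) → ℝ) (A : Idx D → ℝ) : Idx D → ℝ :=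
  fun x => deriv (fun s : ℝ => L (Function.update A x s)) (A x)

/-- Local smoothness of the loss: its gradient is Lipschitz on compact sets. -/
def LocSmooth (L : (Idx D → ℝ) → ℝ) : Prop :=
  ∀ K : Set (Idx D → ℝ), IsCompact K → ∃ β : NNReal, LipschitzOnWith β (tgrad D L) K

/-- Gradient flow over the objective: each entry of each weight matrix moves against
its partial derivative. -/
def GradFlow (L : (Idx D → ℝ) → ℝ) (R : MTree N → ℕ) (T : MTree N)
    (Wt : ℝ → ∀ ν : MTree N, Fin (R ν) → ℕ → ℝ) : Prop :=
  ∀ (ν : MTree N) (i : Fin (R ν)) (j : ℕ) (t : ℝ), 0 ≤ t →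
    HasDerivAt (fun s : ℝ => Wt s ν i j) (- dObj D L R T (Wt t) ν (i : ℕ) j) t

/-- The matricization of an order-`N` tensor according to the index set `I` : the
matrix whose rows are indexed by the modes in `I` and whose columns are indexed by the
remaining modes. -/
noncomputable def matricize (I : Finset (Fin N)) (A : Idx D → ℝ) :
    Matrix (∀ i : {n // n ∈ I}, Fin (D i)) (∀ j : {n // n ∉ I}, Fin (D j)) ℝ :=
  fun ρ κ => A fun n => if h : n ∈ I then ρ ⟨n, h⟩ else κ ⟨n, h⟩

/-- Frobenius norm of the weight matrix `W^(ν) ∈ ℝ^{R_ν × R_{Pa(ν)}}` at node `ν` of `T`. -/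
noncomputable def wFro (R : MTree N → ℕ) (W : ∀ ν : MTree N, Fin (R ν) → ℕ → ℝ)
    (T ν : MTree N) : ℝ :=
  Real.sqrt (∑ i : Fin (R ν), ∑ j : Fin (Rpar R T ν), (W ν i (j : ℕ)) ^ 2)

/-- The weights obtained by pruning the `(ν,r)`'th local component: the `r`'th row of
`W^(ν)` and the `r`'th column of `W^(c)` for every child `c` of `ν` are set to zero. -/
noncomputable def pruneLC (R : MTree N → ℕ) (W : ∀ ν : MTree N, Fin (R ν) → ℕ → ℝ)
    (ν : MTree N) (r : ℕ) : ∀ μ : MTree N, Fin (R μ) → ℕ → ℝ :=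
  fun μ i j =>
    if μ = ν ∧ (i : ℕ) = r then 0
    else if μ ∈ ν.children ∧ j = r then 0
    else W μ i j

end HTF
open HTF HTF.MTree
namespace HTF
namespace MTree
variable {N : ℕ}

theorem attach_flatMap {α β} (ts : List α) (f : α → List β) :
    ts.attach.flatMap (fun t => f t.1) = ts.flatMap f := by
  conv_rhs => rw [← List.attach_map_subtype_val ts]
  rw [List.flatMap_map]

theorem attach_map {α β} (ts : List α) (f : α → β) :
    ts.attach.map (fun t => f t.1) = ts.map f := by
  conv_rhs => rw [← List.attach_map_subtype_val ts]
  rw [List.map_map]; rfl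

theorem nodes_leaf (i : Fin N) : (MTree.leaf i).nodes = [.leaf i] := by rw [MTree.nodes]
theorem nodes_node (ts : List (MTree N)) : (MTree.node ts).nodes = .node ts :: ts.flatMap nodes := by
  rw [MTree.nodes, attach_flatMap]
theorem leafList_leaf (i : Fin N) : (MTree.leaf i).leafList = [i] := by rw [MTree.leafList]
theorem leafList_node (ts : List (MTree N)) : (MTree.node ts).leafList = ts.flatMap leafList := by
  rw [MTree.leafList, attach_flatMap]
theorem branching_node {ts : List (MTree N)} : Branching (MTree.node ts) ↔ ts ≠ [] ∧ ∀ t ∈ ts, Branching t := by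
  rw [MTree.Branching]
  constructor
  · rintro ⟨h1, h2⟩; exact ⟨h1, fun t ht => h2 ⟨t, ht⟩ (List.mem_attach _ _)⟩
  · rintro ⟨h1, h2⟩; exact ⟨h1, fun t _ => h2 t.1 t.2⟩

theorem mem_nodes_self (t : MTree N) : t ∈ t.nodes := by
  cases t with
  | leaf i => rw [nodes_leaf]; simp
  | node ts => rw [nodes_node]; simp

theorem sizeOf_le_of_mem_nodes : ∀ {t ρ : MTree N}, ρ ∈ t.nodes → sizeOf ρ ≤ sizeOf t := by
  intro t
  induction t using MTree.nodes.induct with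
  | case1 i =>
      intro ρ h; rw [nodes_leaf] at h; simp at h; subst h; exact le_refl _
  | case2 ts ih =>
      intro ρ h
      rw [nodes_node] at h
      rcases List.mem_cons.1 h with h | h
      · subst h; exact le_refl _
      · rcases List.mem_flatMap.1 h with ⟨t, ht, hρ⟩
        have h1 : sizeOf ρ ≤ sizeOf t := ih ⟨t, ht⟩ hρ
        have h2 := List.sizeOf_lt_of_mem ht
        simp only [MTree.node.sizeOf_spec]
        omega

theorem not_self_mem_child_nodes {ts : List (MTree N)} {t : MTree N} (ht : t ∈ ts) :
    MTree.node ts ∉ t.nodes := by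
  intro h
  have h1 := sizeOf_le_of_mem_nodes h
  have h2 := List.sizeOf_lt_of_mem ht
  simp only [MTree.node.sizeOf_spec] at h1
  omega

theorem leafList_sublist_of_mem_nodes : ∀ {t ρ : MTree N}, ρ ∈ t.nodes → ∀ i ∈ ρ.leafList, i ∈ t.leafList := by
  intro t
  induction t using MTree.nodes.induct with
  | case1 i =>
      intro ρ h; rw [nodes_leaf] at h; simp at h; subst h; exact fun _ h => h
  | case2 ts ih =>
      intro ρ h i hi
      rw [nodes_node] at h
      rcases List.mem_cons.1 h with h | h
      · subst h; exact hi
      · rcases List.mem_flatMap.1 h with ⟨t, ht, hρ⟩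
        rw [leafList_node]
        exact List.mem_flatMap.2 ⟨t, ht, ih ⟨t, ht⟩ hρ i hi⟩

theorem branching_of_mem_nodes : ∀ {t ρ : MTree N}, Branching t → ρ ∈ t.nodes → Branching ρ := by
  intro t
  induction t using MTree.nodes.induct with
  | case1 i =>
      intro ρ _ h; rw [nodes_leaf] at h; simp at h; subst h; rw [MTree.Branching]; trivial
  | case2 ts ih =>
      intro ρ hb h
      rw [nodes_node] at h
      rcases List.mem_cons.1 h with h | h
      · subst h; exact hb
      · rcases List.mem_flatMap.1 h with ⟨t, ht, hρ⟩
        exact ih ⟨t, ht⟩ ((branching_node.1 hb).2 t ht) hρ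

theorem leafList_ne_nil : ∀ {t : MTree N}, Branching t → t.leafList ≠ [] := by
  intro t
  induction t using MTree.nodes.induct with
  | case1 i => intro _; rw [leafList_leaf]; simp
  | case2 ts ih =>
      intro hb
      obtain ⟨hne, hall⟩ := branching_node.1 hb
      rw [leafList_node]
      obtain ⟨t, ht⟩ := List.exists_mem_of_ne_nil ts hne
      intro hc
      have : t.leafList = [] := by
        have := List.flatMap_eq_nil_iff.1 hc t ht
        exact this
      exact ih ⟨t, ht⟩ (hall t ht) this

/-- Disjointness of distinct children's subtrees (under nodup leaf lists and branching). -/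
theorem disjoint_children {ts : List (MTree N)} (hnd : ((MTree.node ts).leafList).Nodup)
    (hb : Branching (MTree.node ts)) {a b ρ : MTree N} (ha : a ∈ ts) (hbm : b ∈ ts) (hab : a ≠ b)
    (hρ : ρ ∈ a.nodes) : ρ ∉ b.nodes := by
  intro hρb
  have hbr : Branching ρ := branching_of_mem_nodes ((branching_node.1 hb).2 a ha) hρ
  obtain ⟨i, hi⟩ := List.exists_mem_of_ne_nil ρ.leafList (leafList_ne_nil hbr)
  have hia : i ∈ a.leafList := leafList_sublist_of_mem_nodes hρ i hi
  have hib : i ∈ b.leafList := leafList_sublist_of_mem_nodes hρb i hi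
  rw [leafList_node] at hnd
  -- i appears in leaf lists of two distinct elements of ts
  obtain ⟨s, t, hst⟩ := List.append_of_mem ha
  subst hst
  have hb' : b ∈ s ++ t := by
    rcases List.mem_append.1 hbm with h | h
    · exact List.mem_append.2 (Or.inl h)
    · rcases List.mem_cons.1 h with h | h
      · exact absurd h.symm hab
      · exact List.mem_append.2 (Or.inr h)
  rw [List.flatMap_append, List.flatMap_cons] at hnd
  have hd1 := (List.nodup_append.1 hnd).2.2
  have hd2 := (List.nodup_append.1 (List.nodup_append.1 hnd).2.1)
  rcases List.mem_append.1 hb' with h | h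
  · exact hd1 i (List.mem_flatMap.2 ⟨b, h, hib⟩) i (List.mem_append.2 (Or.inl hia)) rfl
  · exact hd2.2.2 i hia i (List.mem_flatMap.2 ⟨b, h, hib⟩) rfl

end MTree
end HTF
namespace HTF
open MTree
variable {N : ℕ} {D : Fin N → ℕ}

theorem interm_leaf (R : MTree N → ℕ) (W : ∀ ν : MTree N, Fin (R ν) → ℕ → ℝ) (i : Fin N) (r : ℕ) (x : Idx D) :
    interm D R W (.leaf i) r x
      = if h : R (.leaf i) = D i then W (.leaf i) (Fin.cast h.symm (x i)) r else 0 := by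
  rw [interm]

theorem interm_node (R : MTree N → ℕ) (W : ∀ ν : MTree N, Fin (R ν) → ℕ → ℝ) (ts : List (MTree N)) (r : ℕ) (x : Idx D) :
    interm D R W (.node ts) r x
      = ∑ r' : Fin (R (.node ts)),
          W (.node ts) r' r * (ts.map fun t => interm D R W t (r' : ℕ) x).prod := by
  rw [interm]
  refine Finset.sum_congr rfl fun r' _ => ?_
  rw [attach_map ts (fun t => interm D R W t ((r' : ℕ)) x)]

theorem replace_self (R : MTree N → ℕ) (W : ∀ ν : MTree N, Fin (R ν) → ℕ → ℝ)
    (μ : MTree N) (A : Fin (R μ) → ℕ → ℝ) : replace R W μ A μ = A := by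
  funext i j; simp [replace]

theorem replace_ne (R : MTree N → ℕ) (W : ∀ ν : MTree N, Fin (R ν) → ℕ → ℝ)
    (μ : MTree N) (A : Fin (R μ) → ℕ → ℝ) {ρ : MTree N} (h : ρ ≠ μ) : replace R W μ A ρ = W ρ := by
  simp [replace, h]

theorem interm_congr (R : MTree N → ℕ) :
    ∀ (t : MTree N) (W₁ W₂ : ∀ ν : MTree N, Fin (R ν) → ℕ → ℝ),
      (∀ ρ ∈ t.nodes, W₁ ρ = W₂ ρ) → ∀ (r : ℕ) (x : Idx D),
      interm D R W₁ t r x = interm D R W₂ t r x := by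
  intro t
  induction t using MTree.nodes.induct with
  | case1 i =>
      intro W₁ W₂ h r x
      rw [interm_leaf, interm_leaf, h _ (mem_nodes_self _)]
  | case2 ts ih =>
      intro W₁ W₂ h r x
      rw [interm_node, interm_node, h _ (mem_nodes_self _)]
      congr 1
      funext r'
      congr 1
      refine congrArg _ (List.map_congr_left fun t ht => ?_)
      refine ih ⟨t, ht⟩ _ _ (fun ρ hρ => h ρ ?_) _ _
      rw [nodes_node]
      exact List.mem_cons.2 (Or.inr (List.mem_flatMap.2 ⟨t, ht, hρ⟩))

/-- replacing at a node not in the tree leaves `interm` unchanged -/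
theorem interm_replace_not_mem (R : MTree N → ℕ) (W : ∀ ν : MTree N, Fin (R ν) → ℕ → ℝ)
    {t μ : MTree N} (h : μ ∉ t.nodes) (A : Fin (R μ) → ℕ → ℝ) (r : ℕ) (x : Idx D) :
    interm D R (replace R W μ A) t r x = interm D R W t r x :=
  interm_congr R t _ _ (fun ρ hρ => replace_ne R W μ A (fun he => h (he ▸ hρ))) r x

theorem children_nodup {ts : List (MTree N)} (hnd : ((MTree.node ts).leafList).Nodup)
    (hb : Branching (MTree.node ts)) : ts.Nodup := by
  rw [leafList_node] at hnd
  have hpw := (List.nodup_flatMap.1 hnd).2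
  refine List.Pairwise.imp_of_mem ?_ hpw
  intro a b ha _ hd he
  subst he
  obtain ⟨i, hi⟩ := List.exists_mem_of_ne_nil a.leafList (leafList_ne_nil ((branching_node.1 hb).2 a ha))
  exact (List.disjoint_left.1 hd) hi hi

theorem nodup_branching_of_child {ts : List (MTree N)} (hnd : ((MTree.node ts).leafList).Nodup)
    (hb : Branching (MTree.node ts)) {t : MTree N} (ht : t ∈ ts) :
    t.leafList.Nodup ∧ Branching t := by
  constructor
  · rw [leafList_node] at hnd
    exact (List.nodup_flatMap.1 hnd).1 t ht
  · exact (branching_node.1 hb).2 t ht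

/-- Linearity of `interm` in the weight matrix of any single node. -/
theorem interm_replace_linear (R : MTree N → ℕ) (W : ∀ ν : MTree N, Fin (R ν) → ℕ → ℝ) :
    ∀ (t : MTree N), t.leafList.Nodup → Branching t → ∀ {μ : MTree N}, μ ∈ t.nodes →
      ∀ (a b : ℝ) (M M' : Fin (R μ) → ℕ → ℝ) (r : ℕ) (x : Idx D),
      interm D R (replace R W μ (fun i j => a * M i j + b * M' i j)) t r x
        = a * interm D R (replace R W μ M) t r x + b * interm D R (replace R W μ M') t r x := by
  intro t
  induction t using MTree.nodes.induct with
  | case1 i =>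
      intro _ _ μ hμ a b M M' r x
      rw [nodes_leaf] at hμ; simp at hμ; subst hμ
      rw [interm_leaf, interm_leaf, interm_leaf]
      by_cases h : R (.leaf i) = D i
      · simp only [dif_pos h, replace_self]
      · simp only [dif_neg h]; ring
  | case2 ts ih =>
      intro hnd hb μ hμ a b M M' r x
      by_cases hc : μ = MTree.node ts
      · subst hc
        rw [interm_node, interm_node, interm_node]
        have hprod : ∀ (A : Fin (R (MTree.node ts)) → ℕ → ℝ) (r' : ℕ),
            (ts.map fun t => interm D R (replace R W (MTree.node ts) A) t r' x)
              = ts.map fun t => interm D R W t r' x := by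
          intro A r'
          refine List.map_congr_left fun t ht => ?_
          exact interm_replace_not_mem R W (not_self_mem_child_nodes ht) A r' x
        simp only [hprod, replace_self]
        rw [Finset.mul_sum, Finset.mul_sum, ← Finset.sum_add_distrib]
        exact Finset.sum_congr rfl fun r' _ => by ring
      · -- μ lies in a unique child t₀
        rw [nodes_node] at hμ
        rcases List.mem_cons.1 hμ with h | h
        · exact absurd h.symm (Ne.symm hc)
        rcases List.mem_flatMap.1 h with ⟨t₀, ht₀, hμt₀⟩
        obtain ⟨s, u, hsu⟩ := List.append_of_mem ht₀
        have hts : ts = s ++ t₀ :: u := hsu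
        have hnotmem : ∀ e ∈ s ++ u, μ ∉ e.nodes := by
          intro e he hmem
          have hets : e ∈ ts := by
            rw [hts]; rcases List.mem_append.1 he with h' | h'
            · exact List.mem_append.2 (Or.inl h')
            · exact List.mem_append.2 (Or.inr (List.mem_cons.2 (Or.inr h')))
          have hnodup := children_nodup hnd hb
          rw [hts] at hnodup
          obtain ⟨hs1, hs2, hs3⟩ := List.nodup_append.1 hnodup
          have ht0s : t₀ ∉ s := fun hh => hs3 t₀ hh t₀ List.mem_cons_self rfl
          have ht0u : t₀ ∉ u := (List.nodup_cons.1 hs2).1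
          have hne : t₀ ≠ e := by
            intro hee
            rcases List.mem_append.1 he with h' | h'
            · exact ht0s (hee ▸ h')
            · exact ht0u (hee ▸ h')
          exact disjoint_children hnd hb ht₀ hets hne hμt₀ hmem
        rw [interm_node, interm_node, interm_node]
        rw [Finset.mul_sum, Finset.mul_sum, ← Finset.sum_add_distrib]
        refine Finset.sum_congr rfl fun r' _ => ?_
        have hW : ∀ A : Fin (R μ) → ℕ → ℝ, replace R W μ A (MTree.node ts) = W (MTree.node ts) :=
          fun A => replace_ne R W μ A (fun he => hc he.symm)
        simp only [hW]
        have hmapeq : ∀ (A : Fin (R μ) → ℕ → ℝ) (v : List (MTree N)) (k : ℕ), (∀ e ∈ v, μ ∉ e.nodes) →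
            (v.map fun t => interm D R (replace R W μ A) t k x)
              = v.map fun t => interm D R W t k x := by
          intro A v k hv
          exact List.map_congr_left fun e he => interm_replace_not_mem R W (hv e he) A _ x
        have hs : ∀ e ∈ s, μ ∉ e.nodes := fun e he => hnotmem e (List.mem_append.2 (Or.inl he))
        have hu : ∀ e ∈ u, μ ∉ e.nodes := fun e he => hnotmem e (List.mem_append.2 (Or.inr he))
        have key : ∀ (A : Fin (R μ) → ℕ → ℝ) (k : ℕ),
            (ts.map fun t => interm D R (replace R W μ A) t k x).prod
              = (s.map fun t => interm D R W t k x).prod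
                * interm D R (replace R W μ A) t₀ k x
                * (u.map fun t => interm D R W t k x).prod := by
          intro A k
          rw [hts, List.map_append, List.map_cons, List.prod_append, List.prod_cons,
            hmapeq A s k hs, hmapeq A u k hu]
          ring
        rw [key _ (r' : ℕ), key _ (r' : ℕ), key _ (r' : ℕ)]
        obtain ⟨hnd₀, hb₀⟩ := nodup_branching_of_child hnd hb ht₀
        rw [ih ⟨t₀, ht₀⟩ hnd₀ hb₀ hμt₀ a b M M' (r' : ℕ) x]
        ring
end HTF
namespace HTF
open MTree
variable {N : ℕ} {D : Fin N → ℕ}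

theorem mem_nodes_of_child {ts : List (MTree N)} {c : MTree N} (hc : c ∈ ts) :
    c ∈ (MTree.node ts).nodes := by
  rw [nodes_node]
  exact List.mem_cons.2 (Or.inr (List.mem_flatMap.2 ⟨c, hc, mem_nodes_self c⟩))

theorem mem_nodes_trans : ∀ {t μ ρ : MTree N}, ρ ∈ μ.nodes → μ ∈ t.nodes → ρ ∈ t.nodes := by
  intro t
  induction t using MTree.nodes.induct with
  | case1 i =>
      intro μ ρ h1 h2
      rw [nodes_leaf] at h2 ⊢; simp at h2; subst h2
      rw [nodes_leaf] at h1; exact h1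
  | case2 ts ih =>
      intro μ ρ h1 h2
      rw [nodes_node] at h2
      rcases List.mem_cons.1 h2 with h | h
      · subst h; exact h1
      · rcases List.mem_flatMap.1 h with ⟨e, he, hμ⟩
        rw [nodes_node]
        exact List.mem_cons.2 (Or.inr (List.mem_flatMap.2 ⟨e, he, ih ⟨e, he⟩ h1 hμ⟩))

theorem nodup_of_mem_nodes : ∀ {t ρ : MTree N}, t.leafList.Nodup → ρ ∈ t.nodes → ρ.leafList.Nodup := by
  intro t
  induction t using MTree.nodes.induct with
  | case1 i =>
      intro ρ hnd h; rw [nodes_leaf] at h; simp at h; subst h; exact hnd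
  | case2 ts ih =>
      intro ρ hnd h
      rw [nodes_node] at h
      rcases List.mem_cons.1 h with h | h
      · subst h; exact hnd
      · rcases List.mem_flatMap.1 h with ⟨e, he, hρ⟩
        refine ih ⟨e, he⟩ ?_ hρ
        rw [leafList_node] at hnd
        exact (List.nodup_flatMap.1 hnd).1 e he

/-- Substitution: if two weight settings agree outside the subtree of `μ` and their
intermediate tensors at `μ` agree, then the intermediate tensors at the root agree. -/
theorem interm_subst (R : MTree N → ℕ) :
    ∀ (t : MTree N), t.leafList.Nodup → Branching t → ∀ {μ : MTree N}, μ ∈ t.nodes →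
      ∀ (W₁ W₂ : ∀ ν : MTree N, Fin (R ν) → ℕ → ℝ),
      (∀ ρ, ρ ∉ μ.nodes → W₁ ρ = W₂ ρ) →
      (∀ (k : ℕ) (x : Idx D), interm D R W₁ μ k x = interm D R W₂ μ k x) →
      ∀ (k : ℕ) (x : Idx D), interm D R W₁ t k x = interm D R W₂ t k x := by
  intro t
  induction t using MTree.nodes.induct with
  | case1 i =>
      intro _ _ μ hμ W₁ W₂ _ hint k x
      rw [nodes_leaf] at hμ; simp at hμ; subst hμ
      exact hint k x
  | case2 ts ih =>
      intro hnd hb μ hμ W₁ W₂ hout hint k x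
      by_cases hc : μ = MTree.node ts
      · subst hc; exact hint k x
      rw [nodes_node] at hμ
      rcases List.mem_cons.1 hμ with h | h
      · exact absurd h.symm (Ne.symm hc)
      rcases List.mem_flatMap.1 h with ⟨t₀, ht₀, hμt₀⟩
      rw [interm_node, interm_node]
      have hroot : W₁ (MTree.node ts) = W₂ (MTree.node ts) := by
        refine hout _ fun hmem => ?_
        have h1 := sizeOf_le_of_mem_nodes hmem
        have h2 := sizeOf_le_of_mem_nodes hμt₀
        have h3 := List.sizeOf_lt_of_mem ht₀
        simp only [MTree.node.sizeOf_spec] at h1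
        omega
      rw [hroot]
      refine Finset.sum_congr rfl fun r' _ => ?_
      congr 1
      refine congrArg _ (List.map_congr_left fun e he => ?_)
      by_cases het : e = t₀
      · subst het
        obtain ⟨hnd₀, hb₀⟩ := nodup_branching_of_child hnd hb he
        exact ih ⟨e, he⟩ hnd₀ hb₀ hμt₀ W₁ W₂ hout hint _ x
      · refine interm_congr R e W₁ W₂ (fun ρ hρ => hout ρ fun hρμ => ?_) _ x
        have hρt₀ : ρ ∈ t₀.nodes := mem_nodes_trans hρμ hμt₀
        exact disjoint_children hnd hb ht₀ he (Ne.symm het) hρt₀ hρ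

/-- Collapse at the node itself: `interm` with the matrix `padRow` keeps only the
`r`'th local component. -/
theorem interm_padRow (R : MTree N → ℕ) (W : ∀ ν : MTree N, Fin (R ν) → ℕ → ℝ)
    (ts : List (MTree N)) (r : Fin (R (MTree.node ts))) (k : ℕ) (x : Idx D) :
    interm D R (replace R W (MTree.node ts) (padRow R W (MTree.node ts) (r : ℕ))) (MTree.node ts) k x
      = W (MTree.node ts) r k * (ts.map fun t => interm D R W t (r : ℕ) x).prod := by
  rw [interm_node]
  have hch : ∀ e ∈ ts, ∀ k' : ℕ,
      interm D R (replace R W (MTree.node ts) (padRow R W (MTree.node ts) (r : ℕ))) e k' x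
        = interm D R W e k' x := fun e he k' =>
    interm_replace_not_mem R W (not_self_mem_child_nodes he) _ k' x
  rw [Finset.sum_congr rfl fun r' _ => by
    rw [replace_self, List.map_congr_left fun e he => hch e he (r' : ℕ)]]
  simp only [padRow]
  rw [Finset.sum_eq_single r]
  · simp
  · intro r' _ hne
    rw [if_neg (fun hh => hne (Fin.ext hh)), zero_mul]
  · intro h; exact absurd (Finset.mem_univ r) h

/-- Collapse at a child: `interm` at the child with matrix `padCol` vanishes except in
component `r`. -/
theorem interm_padCol_child (R : MTree N → ℕ) (W : ∀ ν : MTree N, Fin (R ν) → ℕ → ℝ)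
    (c : MTree N) (r k : ℕ) (x : Idx D) :
    interm D R (replace R W c (padCol R W c r)) c k x
      = if k = r then interm D R W c k x else 0 := by
  cases c with
  | leaf i =>
      rw [interm_leaf, interm_leaf]
      by_cases h : R (.leaf i) = D i
      · simp only [dif_pos h, replace_self, padCol]
        by_cases hk : k = r
        · subst hk; simp
        · simp [hk]
      · simp [dif_neg h]
  | node us =>
      rw [interm_node, interm_node]
      have hch : ∀ e ∈ us, ∀ k' : ℕ,
          interm D R (replace R W (MTree.node us) (padCol R W (MTree.node us) r)) e k' x
            = interm D R W e k' x := fun e he k' =>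
        interm_replace_not_mem R W (not_self_mem_child_nodes he) _ k' x
      rw [Finset.sum_congr rfl fun r' _ => by
        rw [replace_self, List.map_congr_left fun e he => hch e he (r' : ℕ)]]
      simp only [padCol]
      by_cases hk : k = r
      · subst hk; simp
      · simp [hk]

end HTF
namespace HTF
open MTree
variable {N : ℕ} {D : Fin N → ℕ}

/-- `interm` at `ν = node ts` with the `r`'th column of a child `c` kept (others zeroed)
collapses to the `r`'th local component. -/
theorem interm_padCol_at_node (R : MTree N → ℕ) (W : ∀ ν : MTree N, Fin (R ν) → ℕ → ℝ)
    {ts : List (MTree N)} (hnd : ((MTree.node ts).leafList).Nodup)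
    (hb : Branching (MTree.node ts)) {c : MTree N} (hc : c ∈ ts)
    (r : Fin (R (MTree.node ts))) (k : ℕ) (x : Idx D) :
    interm D R (replace R W c (padCol R W c (r : ℕ))) (MTree.node ts) k x
      = W (MTree.node ts) r k * (ts.map fun t => interm D R W t (r : ℕ) x).prod := by
  rw [interm_node]
  have hcne : MTree.node ts ≠ c := by
    intro h
    exact not_self_mem_child_nodes hc (h ▸ mem_nodes_self (MTree.node ts))
  have hroot : replace R W c (padCol R W c (r : ℕ)) (MTree.node ts) = W (MTree.node ts) :=
    replace_ne R W c _ hcne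
  rw [Finset.sum_congr rfl fun r' _ => by rw [hroot]]
  have hfac : ∀ (r' : ℕ) (e : MTree N), e ∈ ts →
      interm D R (replace R W c (padCol R W c (r : ℕ))) e r' x
        = if e = c then (if r' = (r : ℕ) then interm D R W e r' x else 0)
          else interm D R W e r' x := by
    intro r' e he
    by_cases hec : e = c
    · subst hec
      rw [if_pos rfl, interm_padCol_child]
    · rw [if_neg hec]
      refine interm_congr R e _ _ (fun ρ hρ => replace_ne R W c _ fun hee => ?_) r' x
      subst hee
      exact disjoint_children hnd hb hc he (fun h => hec h.symm) (mem_nodes_self ρ) hρ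
  have hprod : ∀ r' : Fin (R (MTree.node ts)),
      (ts.map fun t => interm D R (replace R W c (padCol R W c (r : ℕ))) t (r' : ℕ) x).prod
        = if r' = r then (ts.map fun t => interm D R W t (r : ℕ) x).prod else 0 := by
    intro r'
    by_cases hrr : r' = r
    · subst hrr
      rw [if_pos rfl]
      refine congrArg _ (List.map_congr_left fun e he => ?_)
      rw [hfac _ e he]
      by_cases hec : e = c <;> simp [hec]
    · rw [if_neg hrr]
      refine List.prod_eq_zero ?_
      refine List.mem_map.2 ⟨c, hc, ?_⟩
      rw [hfac _ c hc, if_pos rfl, if_neg (fun hh => hrr (Fin.ext hh))]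
  rw [Finset.sum_congr rfl fun r' _ => by rw [hprod r']]
  rw [Finset.sum_eq_single r]
  · simp
  · intro r' _ hne; rw [if_neg hne, mul_zero]
  · intro h; exact absurd (Finset.mem_univ r) h

/-- Key identity: the end tensor with `padRow` at an interior node `ν` equals the end
tensor with `padCol` at any one of its children. -/
theorem endT_padRow_eq_padCol (R : MTree N → ℕ) (W : ∀ ν : MTree N, Fin (R ν) → ℕ → ℝ)
    (T : MTree N) (hndT : T.leafList.Nodup) (hbT : Branching T)
    {ts : List (MTree N)} (hν : MTree.node ts ∈ T.nodes) {c : MTree N} (hc : c ∈ ts)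
    (r : Fin (R (MTree.node ts))) (x : Idx D) :
    endT D R (replace R W (MTree.node ts) (padRow R W (MTree.node ts) (r : ℕ))) T x
      = endT D R (replace R W c (padCol R W c (r : ℕ))) T x := by
  have hndν : (MTree.node ts).leafList.Nodup := nodup_of_mem_nodes hndT hν
  have hbν : Branching (MTree.node ts) := branching_of_mem_nodes hbT hν
  refine interm_subst R T hndT hbT hν _ _ ?_ ?_ 0 x
  · intro ρ hρ
    have h1 : ρ ≠ MTree.node ts := fun h => hρ (h ▸ mem_nodes_self ρ)
    have h2 : ρ ≠ c := fun h => hρ (h ▸ mem_nodes_of_child hc)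
    rw [replace_ne R W _ _ h1, replace_ne R W _ _ h2]
  · intro k y
    rw [interm_padRow, interm_padCol_at_node R W hndν hbν hc]

/-- Linearity in finite sums of matrices. -/
theorem interm_replace_sum (R : MTree N → ℕ) (W : ∀ ν : MTree N, Fin (R ν) → ℕ → ℝ)
    (t : MTree N) (hnd : t.leafList.Nodup) (hb : Branching t) {μ : MTree N}
    (hμ : μ ∈ t.nodes) {ι : Type*} (s : Finset ι) (c : ι → ℝ) (M : ι → Fin (R μ) → ℕ → ℝ)
    (k : ℕ) (x : Idx D) :
    interm D R (replace R W μ (fun i j => ∑ a ∈ s, c a * M a i j)) t k x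
      = ∑ a ∈ s, c a * interm D R (replace R W μ (M a)) t k x := by
  classical
  induction s using Finset.cons_induction with
  | empty =>
      have h0 := interm_replace_linear R W t hnd hb hμ 0 0 (M := fun _ _ => 0) (M' := fun _ _ => 0) k x
      simp only [mul_zero, zero_mul, add_zero] at h0
      simpa using h0
  | cons a s ha ih =>
      have h := interm_replace_linear R W t hnd hb hμ (c a) 1
        (M := M a) (M' := fun i j => ∑ b ∈ s, c b * M b i j) k x
      rw [Finset.sum_cons]
      rw [show (fun i j => ∑ b ∈ Finset.cons a s ha, c b * M b i j)
        = fun i j => c a * M a i j + 1 * (∑ b ∈ s, c b * M b i j) by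
          funext i j; rw [Finset.sum_cons]; ring]
      rw [h, ih, one_mul]

end HTF
namespace HTF
open MTree
variable {N : ℕ} {D : Fin N → ℕ}

theorem parentIn_leaf (i : Fin N) (ν : MTree N) : parentIn (MTree.leaf i) ν = none := by
  rw [parentIn]

theorem parentIn_node (ts : List (MTree N)) (ν : MTree N) :
    parentIn (MTree.node ts) ν
      = if ν ∈ ts then some (MTree.node ts)
        else ts.attach.findSome? fun t => parentIn t.1 ν := by
  rw [parentIn]

theorem parentIn_eq_none_of_not_mem :
    ∀ {t ν : MTree N}, ν ∉ t.nodes → parentIn t ν = none := by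
  intro t
  induction t using MTree.nodes.induct with
  | case1 i => intro ν _; rw [parentIn_leaf]
  | case2 ts ih =>
      intro ν hν
      rw [parentIn_node]
      rw [if_neg (fun h => hν (mem_nodes_of_child h))]
      rw [List.findSome?_eq_none_iff]
      intro t _
      refine ih t fun h => hν ?_
      exact mem_nodes_trans h (mem_nodes_of_child t.2)

theorem findSome?_eq_of_all {α β} (l : List α) (f : α → Option β) (w : Option β)
    (hall : ∀ e ∈ l, f e = none ∨ f e = w) (hex : ∃ e ∈ l, f e = w) :
    l.findSome? f = w := by
  induction l with
  | nil => obtain ⟨e, he, _⟩ := hex; exact absurd he List.not_mem_nil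
  | cons a l ih =>
      rw [List.findSome?_cons]
      cases hfa : f a with
      | some b =>
          rcases hall a List.mem_cons_self with h | h
          · rw [hfa] at h; exact absurd h (by simp)
          · rw [← h, hfa]
      | none =>
          simp only []
          obtain ⟨e, he, hw⟩ := hex
          rcases List.mem_cons.1 he with rfl | he'
          · rw [hfa] at hw
            rw [← hw, List.findSome?_eq_none_iff]
            intro e' he'
            rcases hall e' (List.mem_cons.2 (Or.inr he')) with h | h
            · exact h
            · rw [← hw] at h; exact h
          · exact ih (fun e'' he'' => hall e'' (List.mem_cons.2 (Or.inr he''))) ⟨e, he', hw⟩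

/-- The parent of a node strictly inside a child `t₀` is found inside `t₀`. -/
theorem parentIn_child {ts : List (MTree N)} (hnd : ((MTree.node ts).leafList).Nodup)
    (hb : Branching (MTree.node ts)) {t₀ ν : MTree N} (ht₀ : t₀ ∈ ts)
    (hν : ν ∈ t₀.nodes) (hνt₀ : ν ≠ t₀) :
    parentIn (MTree.node ts) ν = parentIn t₀ ν := by
  have hνts : ν ∉ ts := by
    intro h
    by_cases he : ν = t₀
    · exact hνt₀ he
    · exact disjoint_children hnd hb ht₀ h (fun hh => he hh.symm) hν (mem_nodes_self ν)
  rw [parentIn_node, if_neg hνts]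
  refine findSome?_eq_of_all _ _ _ ?_ ⟨⟨t₀, ht₀⟩, List.mem_attach _ _, rfl⟩
  intro e _
  by_cases he : e.1 = t₀
  · right; rw [he]
  · left
    refine parentIn_eq_none_of_not_mem fun h => ?_
    exact disjoint_children hnd hb ht₀ e.2 (fun hh => he hh.symm) hν h

/-- Only entries in column `k` of the replaced matrix influence `interm` at the node itself. -/
theorem interm_replace_self_col (R : MTree N → ℕ) (W : ∀ ν : MTree N, Fin (R ν) → ℕ → ℝ)
    (ν : MTree N) (M M' : Fin (R ν) → ℕ → ℝ) (k : ℕ) (x : Idx D)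
    (hcol : ∀ i, M i k = M' i k) :
    interm D R (replace R W ν M) ν k x = interm D R (replace R W ν M') ν k x := by
  cases ν with
  | leaf i =>
      rw [interm_leaf, interm_leaf]
      by_cases h : R (.leaf i) = D i
      · simp only [dif_pos h, replace_self]; exact hcol _
      · simp [dif_neg h]
  | node us =>
      rw [interm_node, interm_node]
      have hch : ∀ (A : Fin (R (MTree.node us)) → ℕ → ℝ) (e : MTree N), e ∈ us → ∀ k' : ℕ,
          interm D R (replace R W (MTree.node us) A) e k' x = interm D R W e k' x :=
        fun A e he k' => interm_replace_not_mem R W (not_self_mem_child_nodes he) _ k' x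
      refine Finset.sum_congr rfl fun r'' _ => ?_
      rw [replace_self, replace_self, hcol r'',
        List.map_congr_left fun e he => hch M e he (r'' : ℕ),
        ← List.map_congr_left fun e he => hch M' e he (r'' : ℕ)]

/-- Only entries of the replaced matrix in columns below `Rpar` (resp. column `k` when
replacing at the root) influence `interm`. -/
theorem interm_replace_coldep (R : MTree N → ℕ) (W : ∀ ν : MTree N, Fin (R ν) → ℕ → ℝ) :
    ∀ (t : MTree N), t.leafList.Nodup → Branching t → ∀ {ν : MTree N}, ν ∈ t.nodes →
      ∀ (M M' : Fin (R ν) → ℕ → ℝ) (k : ℕ) (x : Idx D),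
      (ν = t → ∀ i, M i k = M' i k) →
      (ν ≠ t → ∀ i (j : ℕ), j < Rpar R t ν → M i j = M' i j) →
      interm D R (replace R W ν M) t k x = interm D R (replace R W ν M') t k x := by
  intro t
  induction t using MTree.nodes.induct with
  | case1 i =>
      intro _ _ ν hν M M' k x h1 _
      rw [nodes_leaf] at hν; simp at hν; subst hν
      rw [interm_leaf, interm_leaf]
      by_cases h : R (.leaf i) = D i
      · simp only [dif_pos h, replace_self]
        exact h1 rfl _
      · simp [dif_neg h]
  | case2 ts ih =>
      intro hnd hb ν hν M M' k x h1 h2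
      by_cases hc : ν = MTree.node ts
      · subst hc
        rw [interm_node, interm_node]
        have hch : ∀ (A : Fin (R (MTree.node ts)) → ℕ → ℝ) (e : MTree N), e ∈ ts → ∀ k' : ℕ,
            interm D R (replace R W (MTree.node ts) A) e k' x = interm D R W e k' x := fun A e he k' =>
          interm_replace_not_mem R W (not_self_mem_child_nodes he) _ k' x
        refine Finset.sum_congr rfl fun r' _ => ?_
        rw [replace_self, replace_self, h1 rfl r',
          List.map_congr_left fun e he => hch M e he (r' : ℕ),
          ← List.map_congr_left fun e he => hch M' e he (r' : ℕ)]
      · rw [nodes_node] at hν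
        rcases List.mem_cons.1 hν with h | h
        · exact absurd h.symm (Ne.symm hc)
        rcases List.mem_flatMap.1 h with ⟨t₀, ht₀, hνt₀⟩
        have hcols : ∀ i (j : ℕ), j < Rpar R (MTree.node ts) ν → M i j = M' i j := h2 hc
        rw [interm_node, interm_node]
        refine Finset.sum_congr rfl fun r' _ => ?_
        have hroot : ∀ A : Fin (R ν) → ℕ → ℝ, replace R W ν A (MTree.node ts) = W (MTree.node ts) :=
          fun A => replace_ne R W ν A (fun he => hc he.symm)
        rw [hroot, hroot]
        congr 1
        refine congrArg _ (List.map_congr_left fun e he => ?_)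
        by_cases het : e = t₀
        · subst het
          by_cases hνe : ν = e
          · -- ν is a child of the root: entries in columns < R (node ts) matter
            have hνts : ν ∈ ts := hνe ▸ he
            have hpar : Rpar R (MTree.node ts) ν = R (MTree.node ts) := by
              simp only [Rpar, if_neg hc, parentIn_node, if_pos hνts]
              rfl
            have hcol : ∀ i, M i (r' : ℕ) = M' i (r' : ℕ) := fun i =>
              hcols i (r' : ℕ) (by rw [hpar]; exact r'.isLt)
            rw [← hνe]
            exact interm_replace_self_col R W ν M M' (r' : ℕ) x hcol
          · obtain ⟨hnd₀, hb₀⟩ := nodup_branching_of_child hnd hb he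
            refine ih ⟨e, he⟩ hnd₀ hb₀ hνt₀ M M' (r' : ℕ) x (fun hh => absurd hh hνe) ?_
            intro hne i j hj
            refine hcols i j ?_
            simp only [Rpar, if_neg hne] at hj
            simp only [Rpar, if_neg hc, parentIn_child hnd hb he hνt₀ hνe]
            exact hj
        · have hνne : ν ∉ e.nodes := fun hmem =>
            disjoint_children hnd hb ht₀ he (fun hh => het hh.symm) hνt₀ hmem
          rw [interm_replace_not_mem R W hνne M _ x, interm_replace_not_mem R W hνne M' _ x]

end HTF
namespace HTF
open MTree
variable {N : ℕ} {D : Fin N → ℕ}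

/-- Matrix with a single `1` entry at position `(i, j)` (zero if `i ≥ R μ`). -/
noncomputable def Emat (R : MTree N → ℕ) (μ : MTree N) (i j : ℕ) : Fin (R μ) → ℕ → ℝ :=
  fun i' j' => if (i' : ℕ) = i ∧ j' = j then 1 else 0

/-- The Euler identity: the inner product of the `r`'th row of `W^(nu)` with the
corresponding coefficient tensors equals that of the `r`'th column of any child. -/
theorem euler_identity (R : MTree N → ℕ) (W : ∀ ν : MTree N, Fin (R ν) → ℕ → ℝ)
    (T : MTree N) (hnd : T.leafList.Nodup) (hb : Branching T)
    {ts : List (MTree N)} (hν : MTree.node ts ∈ T.nodes) (r : Fin (R (MTree.node ts)))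
    {c : MTree N} (hc : c ∈ ts) (x : Idx D) :
    ∑ j : Fin (Rpar R T (MTree.node ts)), W (MTree.node ts) r (j : ℕ)
        * endT D R (replace R W (MTree.node ts) (Emat R (MTree.node ts) (r : ℕ) (j : ℕ))) T x
      = ∑ i : Fin (R c), W c i (r : ℕ)
        * endT D R (replace R W c (Emat R c (i : ℕ) (r : ℕ))) T x := by
  have hcT : c ∈ T.nodes := mem_nodes_trans (mem_nodes_of_child hc) hν
  -- Step 1: sum over the row entries
  have h1 := interm_replace_sum (D := D) R W T hnd hb hν (Finset.univ : Finset (Fin (Rpar R T (MTree.node ts))))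
    (fun j => W (MTree.node ts) r (j : ℕ)) (fun j => Emat R (MTree.node ts) (r : ℕ) (j : ℕ)) 0 x
  -- Step 4: sum over the column entries
  have h4 := interm_replace_sum (D := D) R W T hnd hb hcT (Finset.univ : Finset (Fin (R c)))
    (fun i => W c i (r : ℕ)) (fun i => Emat R c (i : ℕ) (r : ℕ)) 0 x
  have hLHS : ∑ j : Fin (Rpar R T (MTree.node ts)), W (MTree.node ts) r (j : ℕ)
      * endT D R (replace R W (MTree.node ts) (Emat R (MTree.node ts) (r : ℕ) (j : ℕ))) T x
      = interm D R (replace R W (MTree.node ts)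
          (fun i' j' => ∑ j : Fin (Rpar R T (MTree.node ts)), W (MTree.node ts) r (j : ℕ) * Emat R (MTree.node ts) (r : ℕ) (j : ℕ) i' j'))
          T 0 x := by rw [h1]; rfl
  have hRHS : ∑ i : Fin (R c), W c i (r : ℕ)
      * endT D R (replace R W c (Emat R c (i : ℕ) (r : ℕ))) T x
      = interm D R (replace R W c
          (fun i' j' => ∑ i : Fin (R c), W c i (r : ℕ) * Emat R c (i : ℕ) (r : ℕ) i' j'))
          T 0 x := by rw [h4]; rfl
  rw [hLHS, hRHS]
  -- Step 4': the column sum matrix is exactly `padCol`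
  have hMcol : (fun i' j' => ∑ i : Fin (R c), W c i (r : ℕ) * Emat R c (i : ℕ) (r : ℕ) i' j')
      = padCol R W c (r : ℕ) := by
    funext i' j'
    simp only [Emat, padCol, mul_ite, mul_one, mul_zero]
    rw [Finset.sum_eq_single i']
    · by_cases hj : j' = (r : ℕ) <;> simp [hj]
    · intro b _ hbne
      rw [if_neg]
      rintro ⟨h1', _⟩
      exact hbne (Fin.ext h1'.symm)
    · intro h; exact absurd (Finset.mem_univ i') h
  -- Step 2: down in columns < Rpar, the row sum matrix agrees with `padRow`
  have hMrow : ∀ (i : Fin (R (MTree.node ts))) (j : ℕ), j < Rpar R T (MTree.node ts) →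
      (∑ j' : Fin (Rpar R T (MTree.node ts)), W (MTree.node ts) r (j' : ℕ) * Emat R (MTree.node ts) (r : ℕ) (j' : ℕ) i j)
        = padRow R W (MTree.node ts) (r : ℕ) i j := by
    intro i j hj
    simp only [Emat, padRow, mul_ite, mul_one, mul_zero]
    by_cases hi : (i : ℕ) = (r : ℕ)
    · have hir : i = r := Fin.ext hi
      subst hir
      rw [if_pos rfl]
      rw [Finset.sum_eq_single (⟨j, hj⟩ : Fin (Rpar R T (MTree.node ts)))]
      · rw [if_pos ⟨rfl, rfl⟩]
      · intro b _ hbne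
        rw [if_neg]
        rintro ⟨_, h2'⟩
        exact hbne (Fin.ext h2'.symm)
      · intro h; exact absurd (Finset.mem_univ _) h
    · rw [if_neg hi]
      refine Finset.sum_eq_zero fun b _ => ?_
      rw [if_neg]
      rintro ⟨h1', _⟩
      exact hi h1'
  rw [hMcol]
  have h2 : interm D R (replace R W (MTree.node ts)
        (fun i' j' => ∑ j : Fin (Rpar R T (MTree.node ts)), W (MTree.node ts) r (j : ℕ) * Emat R (MTree.node ts) (r : ℕ) (j : ℕ) i' j'))
        T 0 x
      = interm D R (replace R W (MTree.node ts) (padRow R W (MTree.node ts) (r : ℕ))) T 0 x := by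
    refine interm_replace_coldep R W T hnd hb hν _ _ 0 x ?_ ?_
    · intro hνT i
      refine hMrow i 0 ?_
      simp [Rpar, hνT]
    · intro hne i j hj
      exact hMrow i j hj
  rw [h2]
  exact endT_padRow_eq_padCol R W T hnd hb hν hc r x

end HTF
namespace HTF
open MTree
variable {N : ℕ} {D : Fin N → ℕ}

theorem went_eq (R : MTree N → ℕ) (W : ∀ ν : MTree N, Fin (R ν) → ℕ → ℝ)
    (ν : MTree N) (i : Fin (R ν)) (j : ℕ) : went R W ν (i : ℕ) j = W ν i j := by
  simp [went]

theorem replace_W_self (R : MTree N → ℕ) (W : ∀ ν : MTree N, Fin (R ν) → ℕ → ℝ)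
    (μ : MTree N) : replace R W μ (W μ) = W := by
  funext ρ i j
  by_cases h : ρ = μ
  · subst h; rw [replace_self]
  · rw [replace_ne R W μ _ h]

theorem upd_eq_replace (R : MTree N → ℕ) (W : ∀ ν : MTree N, Fin (R ν) → ℕ → ℝ)
    (μ : MTree N) (i : Fin (R μ)) (j : ℕ) (s : ℝ) :
    upd R W μ (i : ℕ) j s
      = replace R W μ (fun i' j' => W μ i' j' + (s - W μ i j) * Emat R μ (i : ℕ) j i' j') := by
  funext ρ i' j'
  by_cases h : ρ = μ
  · subst h
    rw [replace_self]
    simp only [upd, Emat, eq_self_iff_true, true_and]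
    by_cases hij : (i' : ℕ) = (i : ℕ) ∧ j' = j
    · rw [if_pos hij, if_pos hij]
      obtain ⟨h1, h2⟩ := hij
      have h3 : i' = i := Fin.ext h1
      subst h3; subst h2; ring
    · rw [if_neg hij, if_neg hij]; ring
  · rw [replace_ne R W μ _ h]
    simp only [upd]
    rw [if_neg (fun hh => h hh.1)]

/-- The end tensor is an affine function of each single weight entry. -/
theorem endT_upd_affine (R : MTree N → ℕ) (W : ∀ ν : MTree N, Fin (R ν) → ℕ → ℝ)
    (T : MTree N) (hnd : T.leafList.Nodup) (hb : Branching T)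
    {μ : MTree N} (hμ : μ ∈ T.nodes) (i : Fin (R μ)) (j : ℕ) (s : ℝ) (x : Idx D) :
    endT D R (upd R W μ (i : ℕ) j s) T x
      = endT D R W T x
        + (s - W μ i j) * endT D R (replace R W μ (Emat R μ (i : ℕ) j)) T x := by
  rw [upd_eq_replace]
  have h := interm_replace_linear R W T hnd hb hμ 1 (s - W μ i j)
    (M := W μ) (M' := Emat R μ (i : ℕ) j) 0 x
  have he : (fun (i' : Fin (R μ)) (j' : ℕ) => W μ i' j' + (s - W μ i j) * Emat R μ (i : ℕ) j i' j')
      = fun i' j' => 1 * W μ i' j' + (s - W μ i j) * Emat R μ (i : ℕ) j i' j' := by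
    funext i' j'; ring
  rw [show endT D R (replace R W μ fun i' j' =>
      W μ i' j' + (s - W μ i j) * Emat R μ (i : ℕ) j i' j') T x
    = interm D R (replace R W μ fun i' j' =>
      W μ i' j' + (s - W μ i j) * Emat R μ (i : ℕ) j i' j') T 0 x from rfl]
  rw [he, h, replace_W_self, one_mul]
  rfl

/-- directional derivative of the loss along `G` in terms of `tgrad`. -/
theorem fderiv_eq_sum_tgrad (L : (Idx D → ℝ) → ℝ) (hL : Differentiable ℝ L)
    (F G : Idx D → ℝ) :
    (fderiv ℝ L F) G = ∑ x, G x * tgrad D L F x := by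
  classical
  have hsingle : ∀ x : Idx D, tgrad D L F x = (fderiv ℝ L F) (Pi.single x (1 : ℝ) : Idx D → ℝ) := by
    intro x
    set e : Idx D → ℝ := Pi.single x (1 : ℝ) with he
    have hupd : ∀ s : ℝ, Function.update F x s = F + (s - F x) • e := by
      intro s; funext y
      by_cases hy : y = x
      · subst hy; simp [he]
      · simp [Function.update, hy, he, Pi.single_apply]
    have hp : HasDerivAt (fun s : ℝ => F + (s - F x) • e) e (F x) := by
      have h1 : HasDerivAt (fun s : ℝ => (s - F x)) 1 (F x) :=
        (hasDerivAt_id (F x)).sub_const (F x)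
      have h2 := h1.smul_const e
      simpa using h2.const_add F
    have hc : HasDerivAt (fun s : ℝ => L (F + (s - F x) • e))
        ((fderiv ℝ L F) e) (F x) := by
      have hfd : HasFDerivAt L (fderiv ℝ L F) (F + (F x - F x) • e) := by
        rw [show F + (F x - F x) • e = F by simp]
        exact (hL F).hasFDerivAt
      have := hfd.comp_hasDerivAt (F x) hp
      exact this
    rw [tgrad]
    rw [show (fun s : ℝ => L (Function.update F x s))
      = fun s : ℝ => L (F + (s - F x) • e) from funext fun s => by rw [hupd s]]
    exact hc.deriv
  have hG : G = ∑ x : Idx D, G x • (Pi.single x (1 : ℝ) : Idx D → ℝ) := by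
    funext y
    rw [Finset.sum_apply]
    simp [Pi.single_apply]
  conv_lhs => rw [hG]
  rw [map_sum]
  refine Finset.sum_congr rfl fun x _ => ?_
  rw [map_smul, hsingle x]
  rfl

/-- Explicit formula for the partial derivatives of the objective. -/
theorem dObj_eq (L : (Idx D → ℝ) → ℝ) (hL : Differentiable ℝ L)
    (R : MTree N → ℕ) (W : ∀ ν : MTree N, Fin (R ν) → ℕ → ℝ) (T : MTree N)
    (hnd : T.leafList.Nodup) (hb : Branching T) {μ : MTree N} (hμ : μ ∈ T.nodes)
    (i : Fin (R μ)) (j : ℕ) :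
    dObj D L R T W μ (i : ℕ) j
      = ∑ x, tgrad D L (endT D R W T) x
          * endT D R (replace R W μ (Emat R μ (i : ℕ) j)) T x := by
  rw [dObj, went_eq]
  set G : Idx D → ℝ := endT D R (replace R W μ (Emat R μ (i : ℕ) j)) T with hG
  have hfun : (fun s : ℝ => obj D L R T (upd R W μ (i : ℕ) j s))
      = fun s : ℝ => L (endT D R W T + (s - W μ i j) • G) := by
    funext s
    rw [obj]
    congr 1
    funext x
    rw [endT_upd_affine R W T hnd hb hμ i j s x]
    simp [hG]
  rw [hfun]
  have hp : HasDerivAt (fun s : ℝ => endT D R W T + (s - W μ i j) • G) G (W μ i j) := by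
    have h1 : HasDerivAt (fun s : ℝ => (s - W μ i j)) 1 (W μ i j) :=
      (hasDerivAt_id _).sub_const _
    have h2 := h1.smul_const G
    simpa using h2.const_add (endT D R W T)
  have hc : HasDerivAt (fun s : ℝ => L (endT D R W T + (s - W μ i j) • G))
      ((fderiv ℝ L (endT D R W T)) G) (W μ i j) := by
    have hfd : HasFDerivAt L (fderiv ℝ L (endT D R W T))
        (endT D R W T + (W μ i j - W μ i j) • G) := by
      rw [show endT D R W T + (W μ i j - W μ i j) • G = endT D R W T by simp]
      exact (hL (endT D R W T)).hasFDerivAt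
    have := hfd.comp_hasDerivAt (W μ i j) hp
    exact this
  rw [hc.deriv, fderiv_eq_sum_tgrad L hL]
  exact Finset.sum_congr rfl fun x _ => mul_comm _ _

end HTF
namespace HTF
open MTree
variable {N : ℕ}

theorem conserved (D : Fin N → ℕ) (L : (Idx D → ℝ) → ℝ) (hL : Differentiable ℝ L)
    (T : MTree N) (hT : T.Valid) (R : MTree N → ℕ)
    (Wt : ℝ → ∀ ν : MTree N, Fin (R ν) → ℕ → ℝ) (hflow : GradFlow D L R T Wt)
    {ts : List (MTree N)} (hν : MTree.node ts ∈ T.nodes) (r : Fin (R (MTree.node ts)))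
    {c : MTree N} (hc : c ∈ ts) (t : ℝ) (ht : 0 ≤ t) :
    rowSq R (Wt t) T (MTree.node ts) (r : ℕ) - colSq R (Wt t) c (r : ℕ)
      = rowSq R (Wt 0) T (MTree.node ts) (r : ℕ) - colSq R (Wt 0) c (r : ℕ) := by
  obtain ⟨hnd, -, hb⟩ := hT
  set f1 : ℝ → ℝ := fun u => ∑ j : Fin (Rpar R T (MTree.node ts)), (Wt u (MTree.node ts) r (j : ℕ)) ^ 2 with hf1
  set f2 : ℝ → ℝ := fun u => ∑ i : Fin (R c), (Wt u c i (r : ℕ)) ^ 2 with hf2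
  have hrow_eq : ∀ u, rowSq R (Wt u) T (MTree.node ts) (r : ℕ) = f1 u := by
    intro u
    rw [rowSq, hf1]
    exact Finset.sum_congr rfl fun j _ => by rw [went_eq]
  have hcol_eq : ∀ u, colSq R (Wt u) c (r : ℕ) = f2 u := fun u => rfl
  -- the difference has zero derivative at every nonnegative time
  have hder : ∀ u : ℝ, 0 ≤ u → HasDerivAt (fun v => f1 v - f2 v) 0 u := by
    intro u hu
    have hrow : HasDerivAt f1
        (∑ j : Fin (Rpar R T (MTree.node ts)),
          ((2 : ℕ) : ℝ) * (Wt u (MTree.node ts) r (j : ℕ)) ^ 1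
            * (- dObj D L R T (Wt u) (MTree.node ts) (r : ℕ) (j : ℕ))) u :=
      HasDerivAt.fun_sum fun j _ => (hflow (MTree.node ts) r (j : ℕ) u hu).pow 2
    have hcol : HasDerivAt f2
        (∑ i : Fin (R c),
          ((2 : ℕ) : ℝ) * (Wt u c i (r : ℕ)) ^ 1
            * (- dObj D L R T (Wt u) c (i : ℕ) (r : ℕ))) u :=
      HasDerivAt.fun_sum fun i _ => (hflow c i (r : ℕ) u hu).pow 2
    have hcT : c ∈ T.nodes := mem_nodes_trans (mem_nodes_of_child hc) hν
    -- Euler identity for the current weights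
    have hE : ∑ j : Fin (Rpar R T (MTree.node ts)),
        Wt u (MTree.node ts) r (j : ℕ) * dObj D L R T (Wt u) (MTree.node ts) (r : ℕ) (j : ℕ)
        = ∑ i : Fin (R c), Wt u c i (r : ℕ) * dObj D L R T (Wt u) c (i : ℕ) (r : ℕ) := by
      have hdj : ∀ j : Fin (Rpar R T (MTree.node ts)),
          dObj D L R T (Wt u) (MTree.node ts) (r : ℕ) (j : ℕ)
            = ∑ x, tgrad D L (endT D R (Wt u) T) x
                * endT D R (replace R (Wt u) (MTree.node ts)
                    (Emat R (MTree.node ts) (r : ℕ) (j : ℕ))) T x :=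
        fun j => dObj_eq L hL R (Wt u) T hnd hb hν r (j : ℕ)
      have hdi : ∀ i : Fin (R c),
          dObj D L R T (Wt u) c (i : ℕ) (r : ℕ)
            = ∑ x, tgrad D L (endT D R (Wt u) T) x
                * endT D R (replace R (Wt u) c (Emat R c (i : ℕ) (r : ℕ))) T x :=
        fun i => dObj_eq L hL R (Wt u) T hnd hb hcT i (r : ℕ)
      calc ∑ j : Fin (Rpar R T (MTree.node ts)),
            Wt u (MTree.node ts) r (j : ℕ) * dObj D L R T (Wt u) (MTree.node ts) (r : ℕ) (j : ℕ)
          = ∑ x, tgrad D L (endT D R (Wt u) T) x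
              * ∑ j : Fin (Rpar R T (MTree.node ts)), Wt u (MTree.node ts) r (j : ℕ)
                * endT D R (replace R (Wt u) (MTree.node ts)
                    (Emat R (MTree.node ts) (r : ℕ) (j : ℕ))) T x := by
            rw [Finset.sum_congr rfl fun j _ => by rw [hdj j, Finset.mul_sum]]
            rw [Finset.sum_comm]
            refine Finset.sum_congr rfl fun x _ => ?_
            rw [Finset.mul_sum]
            exact Finset.sum_congr rfl fun j _ => by ring
        _ = ∑ x, tgrad D L (endT D R (Wt u) T) x
              * ∑ i : Fin (R c), Wt u c i (r : ℕ)
                * endT D R (replace R (Wt u) c (Emat R c (i : ℕ) (r : ℕ))) T x :=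
            Finset.sum_congr rfl fun x _ => by
              rw [euler_identity R (Wt u) T hnd hb hν r hc x]
        _ = ∑ i : Fin (R c), Wt u c i (r : ℕ) * dObj D L R T (Wt u) c (i : ℕ) (r : ℕ) := by
            symm
            rw [Finset.sum_congr rfl fun (i : Fin (R c)) _ => by rw [hdi i, Finset.mul_sum]]
            rw [Finset.sum_comm]
            refine Finset.sum_congr rfl fun x _ => ?_
            rw [Finset.mul_sum]
            exact Finset.sum_congr rfl fun i _ => by ring
    have hzero : (∑ j : Fin (Rpar R T (MTree.node ts)),
          ((2 : ℕ) : ℝ) * (Wt u (MTree.node ts) r (j : ℕ)) ^ 1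
            * (- dObj D L R T (Wt u) (MTree.node ts) (r : ℕ) (j : ℕ)))
        - (∑ i : Fin (R c),
          ((2 : ℕ) : ℝ) * (Wt u c i (r : ℕ)) ^ 1
            * (- dObj D L R T (Wt u) c (i : ℕ) (r : ℕ))) = 0 := by
      have e1 : ∀ (a b : ℝ), ((2 : ℕ) : ℝ) * a ^ 1 * (-b) = -2 * (a * b) := by
        intro a b; push_cast; ring
      rw [Finset.sum_congr rfl fun j _ => e1 _ _, Finset.sum_congr rfl fun i _ => e1 _ _,
        ← Finset.mul_sum, ← Finset.mul_sum, hE]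
      ring
    have := hrow.sub hcol
    rwa [hzero] at this
  -- constancy on [0, t]
  have hcont : ContinuousOn (fun v => f1 v - f2 v) (Set.Icc 0 t) := fun v hv =>
    ((hder v hv.1).continuousAt).continuousWithinAt
  have hd' : ∀ v ∈ Set.Ico 0 t, HasDerivWithinAt (fun v => f1 v - f2 v) 0 (Set.Ici v) v :=
    fun v hv => (hder v hv.1).hasDerivWithinAt
  have hconst := constant_of_has_deriv_right_zero hcont hd' t ⟨ht, le_refl t⟩
  rw [hrow_eq, hrow_eq, hcol_eq, hcol_eq]
  exact hconst

end HTF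

open HTF HTF.MTree in
/-- conservation law: under gradient flow, for every interior node
`ν` and `r ∈ [R_ν]`, the differences between the squared norms of the weight vectors in
the local component `LC(ν,r)` (the `r`'th row of `W^(ν)` and the `r`'th columns of the
children's weight matrices) are constant through time. -/
theorem statement9 {N : ℕ} (D : Fin N → ℕ) (L : (Idx D → ℝ) → ℝ)
    (hL : Differentiable ℝ L) (hLs : LocSmooth D L) (hL0 : ∀ A, 0 ≤ L A)
    (T : MTree N) (hT : T.Valid)
    (R : MTree N → ℕ) (hR : ∀ i : Fin N, R (MTree.leaf i) = D i)
    (Wt : ℝ → ∀ ν : MTree N, Fin (R ν) → ℕ → ℝ)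
    (hflow : GradFlow D L R T Wt)
    (ν : MTree N) (hν : ν ∈ T.nodes) (hint : ν.IsInterior) (r : Fin (R ν))
    (t : ℝ) (ht : 0 ≤ t) :
    (∀ c ∈ ν.children,
      rowSq R (Wt t) T ν (r : ℕ) - colSq R (Wt t) c (r : ℕ)
        = rowSq R (Wt 0) T ν (r : ℕ) - colSq R (Wt 0) c (r : ℕ)) ∧
    (∀ c ∈ ν.children, ∀ c' ∈ ν.children,
      colSq R (Wt t) c (r : ℕ) - colSq R (Wt t) c' (r : ℕ)
        = colSq R (Wt 0) c (r : ℕ) - colSq R (Wt 0) c' (r : ℕ)) := by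
  cases ν with
  | leaf i => exact absurd hint (by rw [MTree.IsInterior]; exact not_false)
  | node ts =>
      have hch : (MTree.node ts).children = ts := by rw [MTree.children]
      rw [hch]
      have key : ∀ c ∈ ts,
          rowSq R (Wt t) T (MTree.node ts) (r : ℕ) - colSq R (Wt t) c (r : ℕ)
            = rowSq R (Wt 0) T (MTree.node ts) (r : ℕ) - colSq R (Wt 0) c (r : ℕ) :=
        fun c hc => HTF.conserved D L hL T hT R Wt hflow hν r hc t ht
      refine ⟨key, fun c hc c' hc' => ?_⟩
      have h1 := key c hc
      have h2 := key c' hc'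
      linarith
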